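/- On the Heisenberg algebra H_n over a field of characteristic 0, the operator ∂̄_h (derivative with respect to h in the basis h^m y^I x^J) satisfies ∂̄_h = ∂_h + Σ_l ∂_{x_l}∂_{y_l}, and [∂̄_h, λ_{x_l}] = ∂_{y_l}, [∂̄_h, λ_{y_l}] = 0, [∂̄_h, λ_h] = id. -/

import Mathlib

/-- A realization of the `n`-th Heisenberg algebra over `k`: a `k`-algebra `H` with
generators `h, x_1, …, x_n, y_1, …, y_n` satisfying `[x_i, y_j] = δ_{ij} h` and all other
commutators of generators zero, together with its PBW basis `{h^m x^I y^J}`. -/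
structure HeisenbergPBW (k : Type*) [Field k] (n : ℕ) (H : Type*) [Ring H]
    [Algebra k H] where
  h : H
  x : Fin n → H
  y : Fin n → H
  basis : Module.Basis (ℕ × (Fin n → ℕ) × (Fin n → ℕ)) k H
  basis_eq : ∀ (m : ℕ) (I J : Fin n → ℕ), basis (m, I, J) =
    h ^ m * (List.ofFn fun i => x i ^ I i).prod * (List.ofFn fun i => y i ^ J i).prod
  comm_xy : ∀ i j, x i * y j - y j * x i = if i = j then h else 0
  comm_xx : ∀ i j, x i * x j = x j * x i
  comm_yy : ∀ i j, y i * y j = y j * y i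
  h_central : ∀ a : H, h * a = a * h

namespace HeisenbergPBW

variable {k : Type*} [Field k] {n : ℕ} {H : Type*} [Ring H] [Algebra k H]

/-- The formal partial derivative `∂_{x_l}` on the PBW basis. -/
noncomputable def pdx (B : HeisenbergPBW k n H) (l : Fin n) : H →ₗ[k] H :=
  B.basis.constr k fun p =>
    (p.2.1 l) • B.basis (p.1, Function.update p.2.1 l (p.2.1 l - 1), p.2.2)

/-- The formal partial derivative `∂_{y_l}` on the PBW basis. -/
noncomputable def pdy (B : HeisenbergPBW k n H) (l : Fin n) : H →ₗ[k] H :=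
  B.basis.constr k fun p =>
    (p.2.2 l) • B.basis (p.1, p.2.1, Function.update p.2.2 l (p.2.2 l - 1))

/-- The formal partial derivative `∂_h` on the PBW basis `h^m x^I y^J`. -/
noncomputable def pdh (B : HeisenbergPBW k n H) : H →ₗ[k] H :=
  B.basis.constr k fun p => p.1 • B.basis (p.1 - 1, p.2.1, p.2.2)

end HeisenbergPBW

/-- `∂̄_h`, the derivative with respect to `h` in an alternative PBW basis
`h^m y^I x^J` of the Heisenberg algebra. -/
noncomputable def HeisenbergPBW.pdhBar {k : Type*} [Field k] {n : ℕ} {H : Type*} [Ring H]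
    [Algebra k H] (B : HeisenbergPBW k n H)
    (basis' : Module.Basis (ℕ × (Fin n → ℕ) × (Fin n → ℕ)) k H) : H →ₗ[k] H :=
  basis'.constr k fun p => p.1 • basis' (p.1 - 1, p.2.1, p.2.2)

set_option linter.unusedSectionVars false
set_option maxHeartbeats 1000000

namespace HeisenbergPBW

variable {k : Type*} [Field k] {n : ℕ} {H : Type*} [Ring H] [Algebra k H]

private lemma nsmul_congr (c : ℕ) {a b : H} (hab : 0 < c → a = b) : c • a = c • b := by
  rcases Nat.eq_zero_or_pos c with h0 | hpos
  · simp [h0]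
  · rw [hab hpos]

private lemma list_take_ofFn_eq {α : Type*} {f g : Fin n → α} (l : Fin n)
    (hfg : ∀ i : Fin n, (i : ℕ) < l → f i = g i) :
    (List.ofFn f).take l = (List.ofFn g).take l := by
  apply List.ext_getElem (by simp)
  intro i h1 h2
  simp only [List.getElem_take, List.getElem_ofFn]
  exact hfg _ (by simpa using h1)

private lemma list_drop_ofFn_eq {α : Type*} {f g : Fin n → α} (l : Fin n)
    (hfg : ∀ i : Fin n, (l : ℕ) < i → f i = g i) :
    (List.ofFn f).drop (l + 1) = (List.ofFn g).drop (l + 1) := by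
  apply List.ext_getElem (by simp)
  intro i h1 h2
  simp only [List.getElem_drop, List.getElem_ofFn]
  exact hfg _ (by show (l : ℕ) < (l : ℕ) + 1 + i; omega)

private lemma list_prod_split {M : Type*} [Monoid M] (f : Fin n → M) (l : Fin n) :
    (List.ofFn f).prod =
      ((List.ofFn f).take l).prod * f l * ((List.ofFn f).drop (l + 1)).prod := by
  have hl : (l : ℕ) < (List.ofFn f).length := by simp [l.isLt]
  conv_lhs => rw [← List.take_append_drop (l : ℕ) (List.ofFn f)]
  rw [List.prod_append, List.drop_eq_getElem_cons hl, List.prod_cons, List.getElem_ofFn,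
    ← mul_assoc]

private lemma commute_take_prod {f : Fin n → H} {l : Fin n} {c : H}
    (hc : ∀ i : Fin n, i ≠ l → Commute c (f i)) :
    Commute c (((List.ofFn f).take l).prod) := by
  apply Commute.list_prod_right
  intro b hb
  obtain ⟨i, hi, rfl⟩ := List.mem_iff_getElem.mp hb
  have hi' : i < (l : ℕ) := by simpa using hi
  simp only [List.getElem_take, List.getElem_ofFn]
  exact hc _ (by simp [Fin.ext_iff]; omega)

private lemma commute_drop_prod {f : Fin n → H} {l : Fin n} {c : H}
    (hc : ∀ i : Fin n, i ≠ l → Commute c (f i)) :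
    Commute c (((List.ofFn f).drop (l + 1)).prod) := by
  apply Commute.list_prod_right
  intro b hb
  obtain ⟨i, hi, rfl⟩ := List.mem_iff_getElem.mp hb
  simp only [List.getElem_drop, List.getElem_ofFn]
  exact hc _ (by simp [Fin.ext_iff]; omega)


private def pp (g : Fin n → H) (I : Fin n → ℕ) : H := (List.ofFn fun i => g i ^ I i).prod

private lemma pp_zero (g : Fin n → H) : pp g 0 = 1 := by
  have : (fun i => g i ^ (0 : Fin n → ℕ) i) = fun _ => (1 : H) := by
    funext i; simp
  rw [pp, this]
  simp

private lemma pp_update (g : Fin n → H) (I : Fin n → ℕ) (l : Fin n) (v : ℕ) :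
    pp g (Function.update I l v) =
      ((List.ofFn fun i => g i ^ I i).take l).prod * g l ^ v *
        ((List.ofFn fun i => g i ^ I i).drop (l + 1)).prod := by
  rw [pp, list_prod_split (fun i => g i ^ Function.update I l v i) l,
    list_take_ofFn_eq (f := fun i => g i ^ Function.update I l v i)
      (g := fun i => g i ^ I i) l
      (fun i hi => by beta_reduce; rw [Function.update_of_ne (by simp [Fin.ext_iff]; omega)]),
    list_drop_ofFn_eq (f := fun i => g i ^ Function.update I l v i)
      (g := fun i => g i ^ I i) l
      (fun i hi => by beta_reduce; rw [Function.update_of_ne (by simp [Fin.ext_iff]; omega)]),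
    Function.update_self]

private lemma pp_split (g : Fin n → H) (I : Fin n → ℕ) (l : Fin n) :
    pp g I =
      ((List.ofFn fun i => g i ^ I i).take l).prod * g l ^ I l *
        ((List.ofFn fun i => g i ^ I i).drop (l + 1)).prod := by
  have := pp_update g I l (I l)
  rwa [Function.update_eq_self] at this

private lemma mul_pp (g : Fin n → H) (hg : ∀ i j, Commute (g i) (g j)) (I : Fin n → ℕ)
    (j : Fin n) :
    g j * pp g I = pp g (Function.update I j (I j + 1)) := by
  have hT : Commute (g j) (((List.ofFn fun i => g i ^ I i).take j).prod) :=
    commute_take_prod (fun i _ => (hg j i).pow_right _)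
  rw [pp_split g I j, pp_update, ← mul_assoc, ← mul_assoc, hT.eq, mul_assoc _ (g j), ← pow_succ']
private lemma q_pow_aux {q y w : H} (hxy : q * y = y * q + w) (hw : Commute w y) :
    ∀ a : ℕ, q * y ^ (a + 1) = y ^ (a + 1) * q + (a + 1) • (w * y ^ a) := by
  intro a
  induction a with
  | zero => simpa using hxy
  | succ b ih =>
      rw [pow_succ y (b + 1), ← mul_assoc, ih, add_mul, mul_assoc, hxy, mul_add,
        smul_mul_assoc, mul_assoc, ← pow_succ, ← (hw.pow_right (b + 1)).eq,
        ← pow_succ]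
      rw [← mul_assoc, ← pow_succ, succ_nsmul (w * y ^ (b + 1)) (b + 1)]
      abel

private lemma q_pow {q y w : H} (hxy : q * y = y * q + w) (hw : Commute w y) (a : ℕ) :
    q * y ^ a = y ^ a * q + a • (w * y ^ (a - 1)) := by
  cases a with
  | zero => simp
  | succ b => simpa using q_pow_aux hxy hw b

private lemma q_mul_pp (g : Fin n → H) {q w : H} (l : Fin n) (I : Fin n → ℕ)
    (hqg : ∀ i, i ≠ l → Commute q (g i))
    (hwg : ∀ i, Commute w (g i))
    (hq : ∀ a : ℕ, q * g l ^ a = g l ^ a * q + a • (w * g l ^ (a - 1))) :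
    q * pp g I = pp g I * q + (I l) • (w * pp g (Function.update I l (I l - 1))) := by
  set T := ((List.ofFn fun i => g i ^ I i).take l).prod with hTdef
  set D := ((List.ofFn fun i => g i ^ I i).drop (l + 1)).prod with hDdef
  have hT : Commute q T := commute_take_prod (fun i hi => (hqg i hi).pow_right _)
  have hD : Commute q D := commute_drop_prod (fun i hi => (hqg i hi).pow_right _)
  have hwT : Commute w T := commute_take_prod (fun i _ => (hwg i).pow_right _)
  rw [pp_split g I l, ← hTdef, ← hDdef]
  calc q * (T * g l ^ I l * D)
      = T * (q * g l ^ I l) * D := by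
        rw [← mul_assoc, ← mul_assoc, hT.eq, mul_assoc T q]
    _ = T * (g l ^ I l * q) * D + (I l) • (T * (w * g l ^ (I l - 1)) * D) := by
        rw [hq, mul_add, add_mul, mul_smul_comm, smul_mul_assoc]
    _ = T * g l ^ I l * D * q + (I l) • (w * (T * g l ^ (I l - 1) * D)) := by
        rw [← mul_assoc T (g l ^ I l) q, mul_assoc _ q D, hD.eq, ← mul_assoc,
          ← mul_assoc T w, ← hwT.eq, mul_assoc w T, mul_assoc w]
    _ = T * g l ^ I l * D * q + (I l) • (w * pp g (Function.update I l (I l - 1))) := by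
        rw [pp_update g I l (I l - 1), ← hTdef, ← hDdef]
section Mrules

variable (e w : H) (u v : Fin n → H)
  (bas : Module.Basis (ℕ × (Fin n → ℕ) × (Fin n → ℕ)) k H)
  (bas_eq : ∀ (m : ℕ) (I J : Fin n → ℕ), bas (m, I, J) = e ^ m * pp u I * pp v J)
  (hcen : ∀ a : H, e * a = a * e)
  (hwcen : ∀ a : H, w * a = a * w)
  (huu : ∀ i j, Commute (u i) (u j))
  (hvv : ∀ i j, Commute (v i) (v j))
  (huv : ∀ i j, i ≠ j → Commute (v i) (u j))
  (hvu : ∀ i, v i * u i = u i * v i + w)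

include bas_eq in
private lemma M_e (m : ℕ) (I J : Fin n → ℕ) :
    e * bas (m, I, J) = bas (m + 1, I, J) := by
  rw [bas_eq, bas_eq, ← mul_assoc, ← mul_assoc, ← pow_succ']

include bas_eq hcen huu in
private lemma M_u (j : Fin n) (m : ℕ) (I J : Fin n → ℕ) :
    u j * bas (m, I, J) = bas (m, Function.update I j (I j + 1), J) := by
  have h1 : Commute e (u j) := hcen (u j)
  have hc : Commute (u j) (e ^ m) := h1.symm.pow_right m
  rw [bas_eq, bas_eq, ← mul_pp u huu I j, ← mul_assoc, ← mul_assoc, hc.eq, mul_assoc (e ^ m)]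

include bas_eq hcen hwcen huu hvv huv hvu in
private lemma M_v (j : Fin n) (m : ℕ) (I J : Fin n → ℕ) :
    v j * bas (m, I, J) = bas (m, I, Function.update J j (J j + 1)) +
      (I j) • (w * bas (m, Function.update I j (I j - 1), J)) := by
  have h1 : Commute e (v j) := hcen (v j)
  have hc : Commute (v j) (e ^ m) := h1.symm.pow_right m
  have hwu : ∀ i, Commute w (u i) := fun i => hwcen (u i)
  have hkey := q_mul_pp u (q := v j) (w := w) j I
    (fun i hi => huv j i (Ne.symm hi))
    hwu
    (q_pow (hvu j) (hwu j))
  rw [bas_eq, bas_eq, bas_eq, ← mul_assoc, ← mul_assoc, hc.eq, mul_assoc (e ^ m), hkey,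
    mul_add, add_mul]
  congr 1
  · rw [mul_assoc (e ^ m) (pp u I * v j), mul_assoc (pp u I) (v j), mul_pp v hvv J j,
      ← mul_assoc]
  · rw [mul_smul_comm, smul_mul_assoc]
    apply nsmul_congr
    intro _
    rw [← mul_assoc (e ^ m) w, ← hwcen (e ^ m), mul_assoc w (e ^ m), mul_assoc w]

end Mrules
private noncomputable def Dh (bas : Module.Basis (ℕ × (Fin n → ℕ) × (Fin n → ℕ)) k H) :
    H →ₗ[k] H :=
  bas.constr k fun p => p.1 • bas (p.1 - 1, p.2.1, p.2.2)

private noncomputable def Du (bas : Module.Basis (ℕ × (Fin n → ℕ) × (Fin n → ℕ)) k H)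
    (l : Fin n) : H →ₗ[k] H :=
  bas.constr k fun p =>
    (p.2.1 l) • bas (p.1, Function.update p.2.1 l (p.2.1 l - 1), p.2.2)

private noncomputable def Dv (bas : Module.Basis (ℕ × (Fin n → ℕ) × (Fin n → ℕ)) k H)
    (l : Fin n) : H →ₗ[k] H :=
  bas.constr k fun p =>
    (p.2.2 l) • bas (p.1, p.2.1, Function.update p.2.2 l (p.2.2 l - 1))

section Dlemmas

variable (e : H) (u v : Fin n → H) (ε : ℤ)
  (bas : Module.Basis (ℕ × (Fin n → ℕ) × (Fin n → ℕ)) k H)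
  (hbe : ∀ m I J, e * bas (m, I, J) = bas (m + 1, I, J))
  (hbu : ∀ (j : Fin n) m I J, u j * bas (m, I, J) =
    bas (m, Function.update I j (I j + 1), J))
  (hbv : ∀ (j : Fin n) m I J, v j * bas (m, I, J) =
    bas (m, I, Function.update J j (J j + 1)) +
      ε • ((I j) • bas (m + 1, Function.update I j (I j - 1), J)))

private lemma Dh_apply (m : ℕ) (I J : Fin n → ℕ) :
    Dh bas (bas (m, I, J)) = m • bas (m - 1, I, J) := by
  rw [Dh, Module.Basis.constr_basis]

private lemma Du_apply (l : Fin n) (m : ℕ) (I J : Fin n → ℕ) :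
    Du bas l (bas (m, I, J)) =
      (I l) • bas (m, Function.update I l (I l - 1), J) := by
  rw [Du, Module.Basis.constr_basis]

private lemma Dv_apply (l : Fin n) (m : ℕ) (I J : Fin n → ℕ) :
    Dv bas l (bas (m, I, J)) =
      (J l) • bas (m, I, Function.update J l (J l - 1)) := by
  rw [Dv, Module.Basis.constr_basis]

include hbe in
private lemma gDh_e : ∀ a : H, Dh bas (e * a) = e * Dh bas a + a := by
  suffices hs : (Dh bas) ∘ₗ LinearMap.mulLeft k e =
      LinearMap.mulLeft k e ∘ₗ Dh bas + LinearMap.id by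
    intro a
    simpa using LinearMap.congr_fun hs a
  refine bas.ext fun ⟨m, I, J⟩ => ?_
  simp only [LinearMap.comp_apply, LinearMap.mulLeft_apply, LinearMap.add_apply,
    LinearMap.id_apply, hbe, Dh_apply]
  cases m with
  | zero => simp
  | succ c =>
      simp only [Nat.add_sub_cancel]
      rw [mul_smul_comm, hbe, succ_nsmul]

include hbe hbu in
private lemma gDh_u : ∀ (j : Fin n) (a : H), Dh bas (u j * a) = u j * Dh bas a := by
  intro j
  suffices hs : (Dh bas) ∘ₗ LinearMap.mulLeft k (u j) =
      LinearMap.mulLeft k (u j) ∘ₗ Dh bas by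
    intro a
    simpa using LinearMap.congr_fun hs a
  refine bas.ext fun ⟨m, I, J⟩ => ?_
  simp only [LinearMap.comp_apply, LinearMap.mulLeft_apply, hbu, Dh_apply,
    mul_smul_comm, hbu]

include hbe hbv in
private lemma gDh_v : ∀ (j : Fin n) (a : H),
    Dh bas (v j * a) = v j * Dh bas a + ε • Du bas j a := by
  intro j
  suffices hs : (Dh bas) ∘ₗ LinearMap.mulLeft k (v j) =
      LinearMap.mulLeft k (v j) ∘ₗ Dh bas + ε • Du bas j by
    intro a
    simpa using LinearMap.congr_fun hs a
  refine bas.ext fun ⟨m, I, J⟩ => ?_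
  simp only [LinearMap.comp_apply, LinearMap.mulLeft_apply, LinearMap.add_apply,
    LinearMap.smul_apply, hbv, Dh_apply, Du_apply, map_add, map_smul]
  cases m with
  | zero =>
      simp only [map_zsmul, map_nsmul, Dh_apply, zero_smul, mul_zero, zero_add,
        one_smul, Nat.sub_self, smul_zero]
  | succ c =>
      simp only [map_zsmul, map_nsmul, Dh_apply, Nat.add_sub_cancel]
      rw [mul_smul_comm, hbv]
      module

include hbe in
private lemma gDu_e : ∀ (l : Fin n) (a : H), Du bas l (e * a) = e * Du bas l a := by
  intro l
  suffices hs : (Du bas l) ∘ₗ LinearMap.mulLeft k e =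
      LinearMap.mulLeft k e ∘ₗ Du bas l by
    intro a
    simpa using LinearMap.congr_fun hs a
  refine bas.ext fun ⟨m, I, J⟩ => ?_
  simp only [LinearMap.comp_apply, LinearMap.mulLeft_apply, hbe, Du_apply, mul_smul_comm]

include hbe in
private lemma gDv_e : ∀ (l : Fin n) (a : H), Dv bas l (e * a) = e * Dv bas l a := by
  intro l
  suffices hs : (Dv bas l) ∘ₗ LinearMap.mulLeft k e =
      LinearMap.mulLeft k e ∘ₗ Dv bas l by
    intro a
    simpa using LinearMap.congr_fun hs a
  refine bas.ext fun ⟨m, I, J⟩ => ?_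
  simp only [LinearMap.comp_apply, LinearMap.mulLeft_apply, hbe, Dv_apply, mul_smul_comm]

include hbu in
private lemma gDv_u : ∀ (l j : Fin n) (a : H), Dv bas l (u j * a) = u j * Dv bas l a := by
  intro l j
  suffices hs : (Dv bas l) ∘ₗ LinearMap.mulLeft k (u j) =
      LinearMap.mulLeft k (u j) ∘ₗ Dv bas l by
    intro a
    simpa using LinearMap.congr_fun hs a
  refine bas.ext fun ⟨m, I, J⟩ => ?_
  simp only [LinearMap.comp_apply, LinearMap.mulLeft_apply, hbu, Dv_apply, mul_smul_comm]

include hbu in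
private lemma gDu_u : ∀ (l j : Fin n) (a : H),
    Du bas l (u j * a) = u j * Du bas l a + (if l = j then a else 0) := by
  intro l j
  by_cases hlj : l = j
  · subst hlj
    suffices hs : (Du bas l) ∘ₗ LinearMap.mulLeft k (u l) =
        LinearMap.mulLeft k (u l) ∘ₗ Du bas l + LinearMap.id by
      intro a
      simpa using LinearMap.congr_fun hs a
    refine bas.ext fun ⟨m, I, J⟩ => ?_
    simp only [LinearMap.comp_apply, LinearMap.mulLeft_apply, LinearMap.add_apply,
      LinearMap.id_apply, hbu, Du_apply, Function.update_self, Function.update_idem,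
      Nat.add_sub_cancel, mul_smul_comm, Function.update_eq_self]
    rcases Nat.eq_zero_or_pos (I l) with h0 | hpos
    · simp [h0]
    · rw [Nat.sub_add_cancel hpos, Function.update_eq_self, succ_nsmul]
  · suffices hs : (Du bas l) ∘ₗ LinearMap.mulLeft k (u j) =
        LinearMap.mulLeft k (u j) ∘ₗ Du bas l by
      intro a
      simp only [if_neg hlj, add_zero]
      simpa using LinearMap.congr_fun hs a
    refine bas.ext fun ⟨m, I, J⟩ => ?_
    simp only [LinearMap.comp_apply, LinearMap.mulLeft_apply, hbu, Du_apply,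
      mul_smul_comm, Function.update_of_ne hlj, Function.update_of_ne (Ne.symm hlj),
      Function.update_comm hlj]

include hbv in
private lemma gDu_v : ∀ (l j : Fin n) (a : H), Du bas l (v j * a) = v j * Du bas l a := by
  intro l j
  suffices hs : (Du bas l) ∘ₗ LinearMap.mulLeft k (v j) =
      LinearMap.mulLeft k (v j) ∘ₗ Du bas l by
    intro a
    simpa using LinearMap.congr_fun hs a
  refine bas.ext fun ⟨m, I, J⟩ => ?_
  simp only [LinearMap.comp_apply, LinearMap.mulLeft_apply, hbv, map_add, map_zsmul,
    map_nsmul, Du_apply, mul_smul_comm]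
  by_cases hlj : l = j
  · subst hlj
    simp only [Function.update_self, Function.update_idem]
    module
  · simp only [Function.update_of_ne hlj, Function.update_of_ne (Ne.symm hlj),
      Function.update_comm hlj]
    module

include hbv in
private lemma gDv_v : ∀ (l j : Fin n) (a : H),
    Dv bas l (v j * a) = v j * Dv bas l a + (if l = j then a else 0) := by
  intro l j
  by_cases hlj : l = j
  · subst hlj
    suffices hs : (Dv bas l) ∘ₗ LinearMap.mulLeft k (v l) =
        LinearMap.mulLeft k (v l) ∘ₗ Dv bas l + LinearMap.id by
      intro a
      simpa using LinearMap.congr_fun hs a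
    refine bas.ext fun ⟨m, I, J⟩ => ?_
    simp only [LinearMap.comp_apply, LinearMap.mulLeft_apply, LinearMap.add_apply,
      LinearMap.id_apply, hbv, map_add, map_zsmul, map_nsmul, Dv_apply,
      Function.update_self, Function.update_idem, Nat.add_sub_cancel, mul_smul_comm]
    rcases Nat.eq_zero_or_pos (J l) with h0 | hpos
    · have hJ : Function.update J l 0 = J := by
        rw [← h0]; exact Function.update_eq_self l J
      simp [h0, hJ]
    · rw [Nat.sub_add_cancel hpos, Function.update_eq_self]
      module
  · suffices hs : (Dv bas l) ∘ₗ LinearMap.mulLeft k (v j) =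
        LinearMap.mulLeft k (v j) ∘ₗ Dv bas l by
      intro a
      simp only [if_neg hlj, add_zero]
      simpa using LinearMap.congr_fun hs a
    refine bas.ext fun ⟨m, I, J⟩ => ?_
    simp only [LinearMap.comp_apply, LinearMap.mulLeft_apply, hbv, map_add, map_zsmul,
      map_nsmul, Dv_apply, mul_smul_comm, Function.update_of_ne hlj,
      Function.update_of_ne (Ne.symm hlj), Function.update_comm hlj]
    module

private lemma Dh_one (hb1 : bas (0, 0, 0) = 1) : Dh bas 1 = 0 := by
  rw [← hb1, Dh_apply]; simp

private lemma Du_one (hb1 : bas (0, 0, 0) = 1) (l : Fin n) : Du bas l 1 = 0 := by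
  rw [← hb1, Du_apply]; simp

private lemma Dv_one (hb1 : bas (0, 0, 0) = 1) (l : Fin n) : Dv bas l 1 = 0 := by
  rw [← hb1, Dv_apply]; simp

include hbe hbu hbv in
private lemma gUniq (hb1 : bas (0, 0, 0) = 1) (D : H →ₗ[k] H) (h1 : D 1 = 0)
    (hDe : ∀ a, D (e * a) = e * D a)
    (hDu : ∀ j a, D (u j * a) = u j * D a)
    (hDv : ∀ j a, D (v j * a) = v j * D a) : D = 0 := by
  have hpow : ∀ (m : ℕ) (a : H), D (e ^ m * a) = e ^ m * D a := by
    intro m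
    induction m with
    | zero => intro a; simp
    | succ c ih =>
        intro a
        rw [pow_succ', mul_assoc, hDe, ih, ← mul_assoc, ← pow_succ']
  have hsplit : ∀ (m : ℕ) (I J : Fin n → ℕ), bas (m, I, J) = e ^ m * bas (0, I, J) := by
    intro m I J
    induction m with
    | zero => simp
    | succ c ih => rw [← hbe, ih, ← mul_assoc, ← pow_succ']
  have key : ∀ (N : ℕ) (I J : Fin n → ℕ), (∑ i, I i) + (∑ i, J i) ≤ N →
      ∀ m, D (bas (m, I, J)) = 0 := by
    intro N
    induction N with
    | zero =>
        intro I J hIJ m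
        have hI : I = 0 := by
          funext i
          have h1' : ∑ i, I i = 0 := by omega
          exact Finset.sum_eq_zero_iff.mp h1' i (Finset.mem_univ i)
        have hJ : J = 0 := by
          funext i
          have h1' : ∑ i, J i = 0 := by omega
          exact Finset.sum_eq_zero_iff.mp h1' i (Finset.mem_univ i)
        rw [hI, hJ, hsplit, hb1, hpow, h1, mul_zero]
    | succ N ih =>
        intro I J hIJ m
        by_cases hI : ∃ j, I j ≠ 0
        · obtain ⟨j, hj⟩ := hI
          have hfix : Function.update (Function.update I j (I j - 1)) j
              (Function.update I j (I j - 1) j + 1) = I := by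
            funext i
            by_cases hij : i = j
            · subst hij; simp only [Function.update_self]; omega
            · simp [Function.update_of_ne hij]
          have hrec : u j * bas (m, Function.update I j (I j - 1), J) = bas (m, I, J) := by
            rw [hbu, hfix]
          have hsum : ∑ i, Function.update I j (I j - 1) i + 1 = ∑ i, I i := by
            rw [Finset.sum_update_of_mem (Finset.mem_univ j),
              Finset.sum_eq_sum_sdiff_singleton_add (Finset.mem_univ j) I]
            have := Nat.pos_of_ne_zero hj
            omega
          rw [← hrec, hDu, ih _ _ (by omega) m, mul_zero]
        · push_neg at hI
          have hI0 : I = 0 := funext fun i => hI i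
          subst hI0
          by_cases hJ : ∃ j, J j ≠ 0
          · obtain ⟨j, hj⟩ := hJ
            have hfix : Function.update (Function.update J j (J j - 1)) j
                (Function.update J j (J j - 1) j + 1) = J := by
              funext i
              by_cases hij : i = j
              · subst hij; simp only [Function.update_self]; omega
              · simp [Function.update_of_ne hij]
            have hrec : v j * bas (m, 0, Function.update J j (J j - 1)) = bas (m, 0, J) := by
              rw [hbv]
              simp only [Pi.zero_apply, zero_smul, smul_zero, add_zero]
              rw [hfix]
            have hsum : ∑ i, Function.update J j (J j - 1) i + 1 = ∑ i, J i := by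
              rw [Finset.sum_update_of_mem (Finset.mem_univ j),
                Finset.sum_eq_sum_sdiff_singleton_add (Finset.mem_univ j) J]
              have := Nat.pos_of_ne_zero hj
              omega
            rw [← hrec, hDv, ih _ _ (by omega) m, mul_zero]
          · push_neg at hJ
            have hJ0 : J = 0 := funext fun i => hJ i
            subst hJ0
            rw [hsplit, hb1, hpow, h1, mul_zero]
  refine bas.ext fun ⟨m, I, J⟩ => ?_
  simp only [LinearMap.zero_apply]
  exact key _ I J le_rfl m

end Dlemmas

end HeisenbergPBW

/-- On `H_n` over a field of characteristic `0`, the operator `∂̄_h` (derivative with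
respect to `h` in the basis `h^m y^I x^J`) satisfies
`∂̄_h = ∂_h + Σ_l ∂_{x_l} ∂_{y_l}`, and `[∂̄_h, λ_{x_l}] = ∂_{y_l}`,
`[∂̄_h, λ_{y_l}] = 0`, `[∂̄_h, λ_h] = id`. -/
theorem HeisenbergPBW.pdhBar_relations {k : Type*} [Field k] [CharZero k] {n : ℕ}
    {H : Type*} [Ring H] [Algebra k H] (B : HeisenbergPBW k n H)
    (basis' : Module.Basis (ℕ × (Fin n → ℕ) × (Fin n → ℕ)) k H)
    (basis'_eq : ∀ (m : ℕ) (I J : Fin n → ℕ), basis' (m, I, J) =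
      B.h ^ m * (List.ofFn fun i => B.y i ^ I i).prod *
        (List.ofFn fun i => B.x i ^ J i).prod) :
    B.pdhBar basis' = B.pdh + ∑ l, (B.pdx l).comp (B.pdy l) ∧
    (∀ l, (B.pdhBar basis').comp (LinearMap.mulLeft k (B.x l)) -
      (LinearMap.mulLeft k (B.x l)).comp (B.pdhBar basis') = B.pdy l) ∧
    (∀ l, (B.pdhBar basis').comp (LinearMap.mulLeft k (B.y l)) -
      (LinearMap.mulLeft k (B.y l)).comp (B.pdhBar basis') = 0) ∧
    (B.pdhBar basis').comp (LinearMap.mulLeft k B.h) -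
      (LinearMap.mulLeft k B.h).comp (B.pdhBar basis') = LinearMap.id := by
  classical
  have hcen := B.h_central
  have basEq : ∀ (m : ℕ) (I J : Fin n → ℕ),
      B.basis (m, I, J) = B.h ^ m * pp B.x I * pp B.y J := B.basis_eq
  have basEq' : ∀ (m : ℕ) (I J : Fin n → ℕ),
      basis' (m, I, J) = B.h ^ m * pp B.y I * pp B.x J := basis'_eq
  have huu : ∀ i j, Commute (B.x i) (B.x j) := B.comm_xx
  have hvv : ∀ i j, Commute (B.y i) (B.y j) := B.comm_yy
  have hxyh : ∀ i, B.x i * B.y i = B.y i * B.x i + B.h := by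
    intro i
    have h2 := B.comm_xy i i
    rw [if_pos rfl, sub_eq_iff_eq_add] at h2
    rw [h2, add_comm]
  have hyxh : ∀ i, B.y i * B.x i = B.x i * B.y i + -B.h := by
    intro i
    have h2 := hxyh i
    rw [h2]
    abel
  have hxy_comm : ∀ i j, i ≠ j → Commute (B.x i) (B.y j) := by
    intro i j hij
    have h2 := B.comm_xy i j
    rw [if_neg hij] at h2
    exact sub_eq_zero.mp h2
  have hyx_comm : ∀ i j, i ≠ j → Commute (B.y i) (B.x j) := fun i j hij =>
    (hxy_comm j i (Ne.symm hij)).symm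
  have hnegcen : ∀ a : H, -B.h * a = a * -B.h := by
    intro a
    rw [neg_mul, mul_neg, hcen]
  -- M-rules for B.basis
  have hbe : ∀ m I J, B.h * B.basis (m, I, J) = B.basis (m + 1, I, J) :=
    M_e (bas := B.basis) (bas_eq := basEq)
  have hbu : ∀ (j : Fin n) m I J, B.x j * B.basis (m, I, J) =
      B.basis (m, Function.update I j (I j + 1), J) :=
    M_u (bas := B.basis) (bas_eq := basEq) (hcen := hcen) (huu := huu)
  have hbvraw := M_v (e := B.h) (w := -B.h) (u := B.x) (v := B.y) (bas := B.basis)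
    (bas_eq := basEq) (hcen := hcen) (hwcen := hnegcen) (huu := huu) (hvv := hvv)
    (huv := hyx_comm) (hvu := hyxh)
  have hbv : ∀ (j : Fin n) m I J, B.y j * B.basis (m, I, J) =
      B.basis (m, I, Function.update J j (J j + 1)) +
        (-1 : ℤ) • ((I j) • B.basis (m + 1, Function.update I j (I j - 1), J)) := by
    intro j m I J
    rw [hbvraw j m I J, neg_mul, hbe, smul_neg, neg_smul, one_smul]
  -- M-rules for basis'
  have hbe' : ∀ m I J, B.h * basis' (m, I, J) = basis' (m + 1, I, J) :=
    M_e (bas := basis') (bas_eq := basEq')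
  have hbu' : ∀ (j : Fin n) m I J, B.y j * basis' (m, I, J) =
      basis' (m, Function.update I j (I j + 1), J) :=
    M_u (bas := basis') (bas_eq := basEq') (hcen := hcen) (huu := hvv)
  have hbvraw' := M_v (e := B.h) (w := B.h) (u := B.y) (v := B.x) (bas := basis')
    (bas_eq := basEq') (hcen := hcen) (hwcen := hcen) (huu := hvv) (hvv := huu)
    (huv := hxy_comm) (hvu := hxyh)
  have hbv' : ∀ (j : Fin n) m I J, B.x j * basis' (m, I, J) =
      basis' (m, I, Function.update J j (J j + 1)) +
        (1 : ℤ) • ((I j) • basis' (m + 1, Function.update I j (I j - 1), J)) := by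
    intro j m I J
    rw [hbvraw' j m I J, hbe', one_smul]
  -- basis vectors at 0
  have hb1 : B.basis (0, 0, 0) = 1 := by
    rw [basEq, pp_zero, pp_zero, pow_zero, mul_one, mul_one]
  have hb1' : basis' (0, 0, 0) = 1 := by
    rw [basEq', pp_zero, pp_zero, pow_zero, mul_one, mul_one]
  -- bridges between pinned defs and generic operators
  have ebar : B.pdhBar basis' = Dh basis' := rfl
  have epdh : B.pdh = Dh B.basis := rfl
  have epdx : ∀ l, B.pdx l = Du B.basis l := fun _ => rfl
  have epdy : ∀ l, B.pdy l = Dv B.basis l := fun _ => rfl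
  -- pointwise commutation facts
  have pdh_h := gDh_e (bas := B.basis) (hbe := hbe)
  have pdh_x := gDh_u (bas := B.basis) (hbe := hbe) (hbu := hbu)
  have pdh_y := gDh_v (bas := B.basis) (ε := (-1 : ℤ)) (hbe := hbe) (hbv := hbv)
  have pdx_h := gDu_e (bas := B.basis) (hbe := hbe)
  have pdx_x := gDu_u (bas := B.basis) (hbu := hbu)
  have pdx_y := gDu_v (bas := B.basis) (ε := (-1 : ℤ)) (hbv := hbv)
  have pdy_h := gDv_e (bas := B.basis) (hbe := hbe)
  have pdy_x := gDv_u (bas := B.basis) (hbu := hbu)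
  have pdy_y := gDv_v (bas := B.basis) (ε := (-1 : ℤ)) (hbv := hbv)
  have bar_h := gDh_e (bas := basis') (hbe := hbe')
  have bar_y := gDh_u (bas := basis') (hbe := hbe') (hbu := hbu')
  have Q_h := gDu_e (bas := basis') (hbe := hbe')
  have Q_y := gDu_u (bas := basis') (hbu := hbu')
  have Q_x := gDu_v (bas := basis') (ε := (1 : ℤ)) (hbv := hbv')
  -- Q l = pdy l
  have claim1 : ∀ l, Du basis' l = Dv B.basis l := by
    intro l
    refine sub_eq_zero.mp (gUniq (e := B.h) (u := B.y) (v := B.x) (ε := (1 : ℤ))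
      (bas := basis') (hbe := hbe') (hbu := hbu') (hbv := hbv') hb1'
      (Du basis' l - Dv B.basis l) ?_ ?_ ?_ ?_)
    · rw [LinearMap.sub_apply, Du_one (bas := basis') hb1' l,
        Dv_one (bas := B.basis) hb1 l, sub_zero]
    · intro a
      rw [LinearMap.sub_apply, LinearMap.sub_apply, Q_h l a, pdy_h l a, mul_sub]
    · intro j a
      rw [LinearMap.sub_apply, LinearMap.sub_apply, Q_y l j a, pdy_y l j a, mul_sub]
      abel
    · intro j a
      rw [LinearMap.sub_apply, LinearMap.sub_apply, Q_x l j a, pdy_x l j a, mul_sub]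
  have bar_x : ∀ (j : Fin n) (a : H),
      Dh basis' (B.x j * a) = B.x j * Dh basis' a + Dv B.basis j a := by
    intro j a
    have bar_x0 := gDh_v (bas := basis') (ε := (1 : ℤ)) (hbe := hbe') (hbv := hbv')
    rw [bar_x0 j a, one_smul, claim1 j]
  refine ⟨?_, ?_, ?_, ?_⟩
  · -- pdhBar = pdh + ∑ pdx ∘ pdy
    refine sub_eq_zero.mp (gUniq (e := B.h) (u := B.y) (v := B.x) (ε := (1 : ℤ))
      (bas := basis') (hbe := hbe') (hbu := hbu') (hbv := hbv') hb1'
      (B.pdhBar basis' - (B.pdh + ∑ l, (B.pdx l).comp (B.pdy l))) ?_ ?_ ?_ ?_)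
    · simp only [LinearMap.sub_apply, LinearMap.add_apply, LinearMap.sum_apply,
        LinearMap.comp_apply, ebar, epdh, epdx, epdy, Dh_one (bas := basis') hb1',
        Dh_one (bas := B.basis) hb1]
      simp [Dv_one (bas := B.basis) hb1]
    · intro a
      simp only [LinearMap.sub_apply, LinearMap.add_apply, LinearMap.sum_apply,
        LinearMap.comp_apply, ebar, epdh, epdx, epdy]
      rw [bar_h a, pdh_h a]
      have hterm : ∀ l : Fin n, Du B.basis l (Dv B.basis l (B.h * a)) =
          B.h * Du B.basis l (Dv B.basis l a) := by
        intro l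
        rw [pdy_h l a, pdx_h l _]
      rw [Finset.sum_congr rfl fun l _ => hterm l, ← Finset.mul_sum, mul_sub, mul_add]
      abel
    · intro j a
      simp only [LinearMap.sub_apply, LinearMap.add_apply, LinearMap.sum_apply,
        LinearMap.comp_apply, ebar, epdh, epdx, epdy]
      rw [bar_y j a, pdh_y j a]
      have hterm : ∀ l : Fin n, Du B.basis l (Dv B.basis l (B.y j * a)) =
          B.y j * Du B.basis l (Dv B.basis l a) + (if l = j then Du B.basis l a else 0) := by
        intro l
        rw [pdy_y l j a, map_add, pdx_y l j _, apply_ite (Du B.basis l), map_zero]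
      rw [Finset.sum_congr rfl fun l _ => hterm l, Finset.sum_add_distrib,
        Finset.sum_ite_eq' Finset.univ j, if_pos (Finset.mem_univ j), ← Finset.mul_sum]
      simp only [neg_smul, one_smul]
      rw [mul_sub, mul_add]
      abel
    · intro j a
      simp only [LinearMap.sub_apply, LinearMap.add_apply, LinearMap.sum_apply,
        LinearMap.comp_apply, ebar, epdh, epdx, epdy]
      rw [bar_x j a, pdh_x j a]
      have hterm : ∀ l : Fin n, Du B.basis l (Dv B.basis l (B.x j * a)) =
          B.x j * Du B.basis l (Dv B.basis l a) + (if l = j then Dv B.basis l a else 0) := by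
        intro l
        rw [pdy_x l j a, pdx_x l j _]
      rw [Finset.sum_congr rfl fun l _ => hterm l, Finset.sum_add_distrib,
        Finset.sum_ite_eq' Finset.univ j, if_pos (Finset.mem_univ j), ← Finset.mul_sum]
      rw [mul_sub, mul_add]
      abel
  · intro l
    ext a
    simp only [LinearMap.sub_apply, LinearMap.comp_apply, LinearMap.mulLeft_apply, ebar,
      epdy]
    rw [bar_x l a]
    abel
  · intro l
    ext a
    simp only [LinearMap.sub_apply, LinearMap.comp_apply, LinearMap.mulLeft_apply,
      LinearMap.zero_apply, ebar]
    rw [bar_y l a]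
    abel
  · ext a
    simp only [LinearMap.sub_apply, LinearMap.comp_apply, LinearMap.mulLeft_apply,
      LinearMap.id_apply, ebar]
    rw [bar_h a]
    abel
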